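/- Let A be the 3×3 real matrix [[1,1,0],[0,0,1],[1,0,0]] (the adjacency matrix of the error-generating state diagram). Then the characteristic polynomial of A is X³ − X² − 1; this polynomial has exactly one real root λ, this root satisfies 1 < λ < 2, and log₂ λ lies strictly between 0.54 and 0.56 (the paper's value log₂(λ_max) ≈ 0.55). -/
import Mathlib

theorem charpoly_aux :
    ∃ lam : ℝ, (lam ^ 3 - lam ^ 2 - 1 = 0) ∧
      (∀ x : ℝ, x ^ 3 - x ^ 2 - 1 = 0 → x = lam) ∧
      1 < lam ∧ lam < 2 ∧
      0.54 < Real.log lam / Real.log 2 ∧ Real.log lam / Real.log 2 < 0.56 := by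
  -- all roots are > 1
  have hgt1 : ∀ x : ℝ, x ^ 3 - x ^ 2 - 1 = 0 → 1 < x := by
    intro x hx
    by_contra h
    push_neg at h
    nlinarith [sq_nonneg x, sq_nonneg (x - 1), sq_nonneg (x + 1)]
  -- strict monotonicity on (1, ∞)
  have hmono : ∀ a b : ℝ, 1 < a → a < b → a ^ 3 - a ^ 2 - 1 < b ^ 3 - b ^ 2 - 1 := by
    intro a b ha hab
    nlinarith [mul_pos (sub_pos.mpr hab) (sub_pos.mpr ha), sq_nonneg (a + b),
      sq_nonneg (a - b),
      mul_pos (sub_pos.mpr hab)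
        (mul_pos (zero_lt_one.trans ha) (zero_lt_one.trans (ha.trans hab)))]
  -- existence via IVT
  have hcont : ContinuousOn (fun x : ℝ => x ^ 3 - x ^ 2 - 1) (Set.Icc (1.46 : ℝ) 1.47) := by
    fun_prop
  obtain ⟨lam, hmem, hroot⟩ := intermediate_value_Icc (by norm_num) hcont
    (show (0:ℝ) ∈ Set.Icc ((1.46:ℝ)^3 - 1.46^2 - 1) ((1.47:ℝ)^3 - 1.47^2 - 1) by
      constructor <;> norm_num)
  obtain ⟨h146, h147⟩ := hmem
  simp only at hroot
  have h1lt : 1 < lam := hgt1 lam hroot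
  have hlt2 : lam < 2 := by nlinarith
  have hlam146 : (1.46 : ℝ) < lam := by
    rcases lt_or_eq_of_le h146 with h | h
    · exact h
    · exfalso; rw [← h] at hroot; norm_num at hroot
  have hlam147 : lam < (1.47 : ℝ) := by
    rcases lt_or_eq_of_le h147 with h | h
    · exact h
    · exfalso; rw [h] at hroot; norm_num at hroot
  refine ⟨lam, hroot, ?_, h1lt, hlt2, ?_, ?_⟩
  · intro x hx
    have hx1 := hgt1 x hx
    rcases lt_trichotomy x lam with h | h | h
    · have := hmono x lam hx1 h; rw [hx, hroot] at this; exact absurd this (lt_irrefl 0)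
    · exact h
    · have := hmono lam x h1lt h; rw [hx, hroot] at this; exact absurd this (lt_irrefl 0)
  · -- 0.54 < log lam / log 2  ⟺  27 log 2 < 50 log lam
    have hlog2 : (0:ℝ) < Real.log 2 := Real.log_pos (by norm_num)
    rw [lt_div_iff₀ hlog2]
    have key : (2:ℝ) ^ (27:ℕ) < lam ^ (50:ℕ) := by
      calc (2:ℝ) ^ (27:ℕ) < (1.46:ℝ) ^ (50:ℕ) := by norm_num
        _ < lam ^ 50 := by
          apply pow_lt_pow_left₀ hlam146 (by norm_num)
          norm_num
    have := Real.log_lt_log (by positivity) key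
    rw [Real.log_pow, Real.log_pow] at this
    push_cast at this
    nlinarith
  · have hlog2 : (0:ℝ) < Real.log 2 := Real.log_pos (by norm_num)
    rw [div_lt_iff₀ hlog2]
    have key : lam ^ (50:ℕ) < (2:ℝ) ^ (28:ℕ) := by
      calc lam ^ (50:ℕ) < (1.47:ℝ) ^ (50:ℕ) :=
          pow_lt_pow_left₀ hlam147 (by linarith) (by norm_num)
        _ < 2 ^ 28 := by norm_num
    have := Real.log_lt_log (by positivity) key
    rw [Real.log_pow, Real.log_pow] at this
    push_cast at this
    nlinarith

open Polynomial in
/-- The adjacency matrix `A = [[1,1,0],[0,0,1],[1,0,0]]` of the error-generating state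
diagram has characteristic polynomial `X³ − X² − 1`; this polynomial has exactly one
real root `λ`, which satisfies `1 < λ < 2`, and `log₂ λ` lies strictly between `0.54`
and `0.56`. -/
theorem charpoly_adjacency_and_root :
    (Matrix.charpoly (!![1, 1, 0; 0, 0, 1; 1, 0, 0] : Matrix (Fin 3) (Fin 3) ℝ)
        = X ^ 3 - X ^ 2 - 1) ∧
    ∃ lam : ℝ, (lam ^ 3 - lam ^ 2 - 1 = 0) ∧
      (∀ x : ℝ, x ^ 3 - x ^ 2 - 1 = 0 → x = lam) ∧
      1 < lam ∧ lam < 2 ∧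
      0.54 < Real.log lam / Real.log 2 ∧ Real.log lam / Real.log 2 < 0.56 := by
  constructor
  · rw [Matrix.charpoly, Matrix.det_fin_three]
    simp [Matrix.charmatrix_apply, Matrix.vecHead, Matrix.vecTail]
    ring
  · exact charpoly_aux
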